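/- Let f : I → ℝ be q,ω-differentiable on I. Then D_{q,ω}[f](t) = 0 for every t ∈ I if and only if f is constant on I (i.e., f(t) = f(s) for all t,s ∈ I). -/

import Mathlib

noncomputable section

namespace Hahn

/-- The fixed point `ω₀ = ω/(1-q)` of `t ↦ qt+ω`. -/
def omega0 (q ω : ℝ) : ℝ := ω / (1 - q)

/-- The Hahn difference operator of `f` (viewed as a function on the interval `I`):
for `t ≠ ω₀` it is `(f(qt+ω) - f(t))/((q-1)t+ω)`, and at `ω₀` it is the derivative of `f`
at `ω₀` (within `I`). -/
def hahnD (q ω : ℝ) (I : Set ℝ) (f : ℝ → ℝ) (t : ℝ) : ℝ :=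
  if t = omega0 q ω then derivWithin f I t
  else (f (q * t + ω) - f t) / ((q - 1) * t + ω)

/-- `f` is `q,ω`-differentiable on `I`: the only nontrivial requirement is
differentiability at `ω₀` (for `t ≠ ω₀` the Hahn quotient always exists). -/
def HahnDiffOn (q ω : ℝ) (I : Set ℝ) (f : ℝ → ℝ) : Prop :=
  DifferentiableWithinAt ℝ f I (omega0 q ω)

/-- The `q`-bracket `[k]_q = (1-q^k)/(1-q)`. -/
def qnum (q : ℝ) (k : ℕ) : ℝ := (1 - q ^ k) / (1 - q)

/-- The `k`-th term of the Jackson–Nörlund series of `f` at `x`. -/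
def jnTerm (q ω : ℝ) (f : ℝ → ℝ) (x : ℝ) (k : ℕ) : ℝ :=
  q ^ k * f (q ^ k * x + ω * qnum q k)

/-- The Jackson–Nörlund series of `f` converges at `x`. -/
def JNSummable (q ω : ℝ) (f : ℝ → ℝ) (x : ℝ) : Prop :=
  Summable (jnTerm q ω f x)

/-- The Jackson–Nörlund integral `∫_{ω₀}^x f(t) d_{q,ω}t`. -/
def jnInt0 (q ω : ℝ) (f : ℝ → ℝ) (x : ℝ) : ℝ :=
  (x * (1 - q) - ω) * ∑' k : ℕ, jnTerm q ω f x k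

/-- The Jackson–Nörlund integral `∫_a^b f(t) d_{q,ω}t`. -/
def jnInt (q ω : ℝ) (f : ℝ → ℝ) (a b : ℝ) : ℝ :=
  jnInt0 q ω f b - jnInt0 q ω f a

/-- `f` is `q,ω`-integrable on `[a,b]`. -/
def JNIntegrable (q ω : ℝ) (f : ℝ → ℝ) (a b : ℝ) : Prop :=
  JNSummable q ω f a ∧ JNSummable q ω f b

/-- The set `[s]_{q,ω} = {q^n s + ω[n]_q : n ∈ ℕ} ∪ {ω₀}`. -/
def qwOrbit (q ω s : ℝ) : Set ℝ :=
  {x | ∃ n : ℕ, x = q ^ n * s + ω * qnum q n} ∪ {omega0 q ω}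

/-- The `q,ω`-interval `[a,b]_{q,ω}`. -/
def qwInterval (q ω a b : ℝ) : Set ℝ :=
  qwOrbit q ω a ∪ qwOrbit q ω b

/-- `D_{q,ω}[f](t) = 0` for every `t ∈ I` iff `f` is constant on `I`. -/
theorem hahnD_eq_zero_iff_const
    (q ω : ℝ) (hq : 0 < q) (hq1 : q < 1) (hω : 0 ≤ ω)
    (I : Set ℝ) (hI : I.OrdConnected) (hmem : omega0 q ω ∈ I)
    (f : ℝ → ℝ) (hf : HahnDiffOn q ω I f) :
    (∀ t ∈ I, hahnD q ω I f t = 0) ↔ ∀ t ∈ I, ∀ s ∈ I, f t = f s := by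
  have h1q : (1 : ℝ) - q ≠ 0 := by linarith
  have hfix : q * omega0 q ω + ω = omega0 q ω := by
    unfold omega0; field_simp; ring
  have hmemI : ∀ x ∈ I, q * x + ω ∈ I := by
    intro x hx
    have hq0 : (0:ℝ) ≤ q := hq.le
    have key : q * x + ω = omega0 q ω + q * (x - omega0 q ω) := by
      have : omega0 q ω * (1 - q) = ω := by unfold omega0; field_simp
      nlinarith [this]
    apply hI.uIcc_subset hmem hx
    rcases le_total (omega0 q ω) x with hle | hle
    · rw [Set.uIcc_of_le hle]; constructor <;> nlinarith
    · rw [Set.uIcc_of_ge hle]; constructor <;> nlinarith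
  constructor
  · intro h
    suffices key : ∀ t ∈ I, f t = f (omega0 q ω) by
      intro t ht s hs; rw [key t ht, key s hs]
    intro t ht
    by_cases htω : t = omega0 q ω
    · rw [htω]
    set ω₀ := omega0 q ω with hω₀
    set g : ℕ → ℝ := fun n => ω₀ + q ^ n * (t - ω₀) with hg
    have hgrec : ∀ n, g (n + 1) = q * g n + ω := by
      intro n
      have : q * ω₀ + ω = ω₀ := hfix
      simp only [hg]
      ring_nf
      nlinarith [this]
    have hgI : ∀ n, g n ∈ I := by
      intro n
      induction n with
      | zero => simpa [hg] using ht
      | succ k ih => rw [hgrec k]; exact hmemI _ ih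
    have hgne : ∀ n, g n ≠ ω₀ := by
      intro n hcon
      have hqn : q ^ n ≠ 0 := by positivity
      simp only [hg] at hcon
      have : q ^ n * (t - ω₀) = 0 := by linarith
      rcases mul_eq_zero.mp this with h' | h'
      · exact hqn h'
      · exact htω (by linarith)
    have hconst : ∀ n, f (g n) = f t := by
      intro n
      induction n with
      | zero => simp [hg]
      | succ k ih =>
        have h0 := h (g k) (hgI k)
        rw [hahnD, if_neg (hgne k)] at h0
        have hden : (q - 1) * g k + ω ≠ 0 := by
          have heq : (q - 1) * g k + ω = (q - 1) * (q ^ k * (t - ω₀)) := by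
            have : ω₀ * (1 - q) = ω := by simp only [hω₀, omega0]; field_simp
            simp only [hg]; nlinarith [this]
          rw [heq]
          have : q ^ k * (t - ω₀) ≠ 0 := by
            refine mul_ne_zero (by positivity) (sub_ne_zero.mpr htω)
          exact mul_ne_zero (by linarith) this
        have hnum : f (q * g k + ω) - f (g k) = 0 := by
          rcases div_eq_zero_iff.mp h0 with h' | h'
          · exact h'
          · exact absurd h' hden
        rw [hgrec k]
        linarith [ih]
    have hlim : Filter.Tendsto g Filter.atTop (nhds ω₀) := by
      have h2 : Filter.Tendsto (fun n : ℕ => q ^ n * (t - ω₀)) Filter.atTop (nhds 0) := by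
        simpa using (tendsto_pow_atTop_nhds_zero_of_lt_one hq.le hq1).mul_const (t - ω₀)
      have := h2.const_add ω₀
      simpa using this
    have hcw : ContinuousWithinAt f I ω₀ := hf.continuousWithinAt
    have htend : Filter.Tendsto (fun n => f (g n)) Filter.atTop (nhds (f ω₀)) :=
      hcw.tendsto.comp (tendsto_nhdsWithin_iff.mpr ⟨hlim, Filter.Eventually.of_forall hgI⟩)
    have htend' : Filter.Tendsto (fun _ : ℕ => f t) Filter.atTop (nhds (f ω₀)) := by
      simpa [hconst] using htend
    exact tendsto_nhds_unique tendsto_const_nhds htend'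
  · intro h t ht
    rw [hahnD]
    split_ifs with h0
    · have hcongr : derivWithin f I t = derivWithin (fun _ => f t) I t :=
        derivWithin_congr (fun x hx => h x hx t ht) rfl
      rw [hcongr]
      by_cases hiso : nhdsWithin t (I \ {t}) = ⊥
      · exact congrFun (derivWithin_const I (f t)) t
      · refine (fun _ => congrFun (derivWithin_const I (f t)) t) (?_ : UniqueDiffWithinAt ℝ I t)
        have hconv : Convex ℝ I := convex_iff_ordConnected.mpr hI
        have hne : (I \ {t}).Nonempty := by
          by_contra hcon
          apply hiso
          rw [Set.not_nonempty_iff_eq_empty.mp hcon]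
          simp
        obtain ⟨a, haI, hat⟩ := hne
        have hint : (interior I).Nonempty := by
          rcases lt_or_gt_of_ne (show a ≠ t from fun hh => hat (hh ▸ Set.mem_singleton a)) with hlt | hlt
          · exact ⟨(a + t) / 2, interior_mono (hI.out haI ht)
              (by rw [interior_Icc]; constructor <;> linarith)⟩
          · exact ⟨(t + a) / 2, interior_mono (hI.out ht haI)
              (by rw [interior_Icc]; constructor <;> linarith)⟩
        exact uniqueDiffWithinAt_convex hconv hint (subset_closure ht)
    · have hmem' : q * t + ω ∈ I := hmemI t ht
      rw [h (q * t + ω) hmem' t ht, sub_self, zero_div]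

end Hahn
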